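/- Fluctuation-dissipation relation for alternating-update GAN SDE: suppose μ* is an invariant measure of the SDE with drift b = b₀ + ηb₁ and diffusion σ as above, such that E_{μ*}[𝒜Φ(Θ*,𝒲*)] = 0 for the generator 𝒜. Then E_{μ*}[‖∇_θΦ‖₂² − ‖∇_ωΦ‖₂²] = β^{−1}E_{μ*}[Tr(Σ_θ∇²_θΦ + Σ_ω∇²_ωΦ)] − (η/2)E_{μ*}[∇_θΦ^T∇²_θΦ∇_θΦ + ∇_ωΦ^T∇²_ωΦ∇_ωΦ], where all functions are evaluated at (Θ*,𝒲*) ~ μ*. -/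

import Mathlib

open Real Matrix

lemma trace_fromBlocks_aux {m n : Type*} [Fintype m] [Fintype n]
    (A : Matrix m m ℝ) (B : Matrix m n ℝ) (C : Matrix n m ℝ) (D : Matrix n n ℝ) :
    (Matrix.fromBlocks A B C D).trace = A.trace + D.trace := by
  simp [Matrix.trace, Matrix.diag, Fintype.sum_sum_type]

/-- fluctuation-dissipation relation (FDR1) for the alternating-update GAN SDE. -/
theorem stmt_11 (dθ dω : ℕ) (η β : ℝ) (hη : 0 < η) (hβ : 0 < β)
    (Φ : EuclideanSpace ℝ (Fin dθ ⊕ Fin dω) → ℝ) (hΦ : ContDiff ℝ 2 Φ)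
    -- gradient and Hessian of Φ in coordinates:
    (g : EuclideanSpace ℝ (Fin dθ ⊕ Fin dω) → (Fin dθ ⊕ Fin dω) → ℝ)
    (hg : ∀ u i, g u i = fderiv ℝ Φ u (EuclideanSpace.single i 1))
    (H : EuclideanSpace ℝ (Fin dθ ⊕ Fin dω) → Matrix (Fin dθ ⊕ Fin dω) (Fin dθ ⊕ Fin dω) ℝ)
    (hH : ∀ u i j, H u i j =
      fderiv ℝ (fun v => fderiv ℝ Φ v (EuclideanSpace.single j 1)) u (EuclideanSpace.single i 1))
    -- Hessian blocks:
    (Hθθ : EuclideanSpace ℝ (Fin dθ ⊕ Fin dω) → Matrix (Fin dθ) (Fin dθ) ℝ)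
    (Hθω : EuclideanSpace ℝ (Fin dθ ⊕ Fin dω) → Matrix (Fin dθ) (Fin dω) ℝ)
    (Hωθ : EuclideanSpace ℝ (Fin dθ ⊕ Fin dω) → Matrix (Fin dω) (Fin dθ) ℝ)
    (Hωω : EuclideanSpace ℝ (Fin dθ ⊕ Fin dω) → Matrix (Fin dω) (Fin dω) ℝ)
    (hHθθ : ∀ u i j, Hθθ u i j = H u (.inl i) (.inl j))
    (hHθω : ∀ u i j, Hθω u i j = H u (.inl i) (.inr j))
    (hHωθ : ∀ u i j, Hωθ u i j = H u (.inr i) (.inl j))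
    (hHωω : ∀ u i j, Hωω u i j = H u (.inr i) (.inr j))
    -- diffusion coefficients:
    (Sθ : EuclideanSpace ℝ (Fin dθ ⊕ Fin dω) → Matrix (Fin dθ) (Fin dθ) ℝ)
    (Sω : EuclideanSpace ℝ (Fin dθ ⊕ Fin dω) → Matrix (Fin dω) (Fin dω) ℝ)
    (hSθ : ∀ u, (Sθ u).IsSymm ∧ (Sθ u).PosSemidef)
    (hSω : ∀ u, (Sω u).IsSymm ∧ (Sω u).PosSemidef)
    -- drift:
    (b₀ b₁ b : EuclideanSpace ℝ (Fin dθ ⊕ Fin dω) → (Fin dθ ⊕ Fin dω) → ℝ)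
    (hb₀ : ∀ u, b₀ u = Sum.elim (fun i => -(g u (.inl i))) (fun j => g u (.inr j)))
    (hb₁ : ∀ u, b₁ u = (1/2 : ℝ) •
      ((Matrix.fromBlocks (Hθθ u) (-(Hθω u)) (-(Hωθ u)) (-(Hωω u))).mulVec (b₀ u)))
    (hb : ∀ u, b u = b₀ u + η • b₁ u)
    -- σσᵀ = (2/β)·diag(Sθ, Sω) and the generator applied to Φ:
    (SS : EuclideanSpace ℝ (Fin dθ ⊕ Fin dω) → Matrix (Fin dθ ⊕ Fin dω) (Fin dθ ⊕ Fin dω) ℝ)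
    (hSS : ∀ u, SS u = (2 / β) • Matrix.fromBlocks (Sθ u) 0 0 (Sω u))
    (AΦ : EuclideanSpace ℝ (Fin dθ ⊕ Fin dω) → ℝ)
    (hAΦ : ∀ u, AΦ u = (b u) ⬝ᵥ (g u) + (1/2 : ℝ) * ((SS u) * (H u)).trace)
    -- the invariant measure and stationarity:
    (μ : MeasureTheory.Measure (EuclideanSpace ℝ (Fin dθ ⊕ Fin dω)))
    [MeasureTheory.IsProbabilityMeasure μ]
    (hstat : ∫ u, AΦ u ∂μ = 0)
    -- all expectations are assumed finite:
    (hint1 : MeasureTheory.Integrable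
      (fun u => (∑ i, (g u (.inl i)) ^ 2) - (∑ j, (g u (.inr j)) ^ 2)) μ)
    (hint2 : MeasureTheory.Integrable
      (fun u => ((Sθ u) * (Hθθ u)).trace + ((Sω u) * (Hωω u)).trace) μ)
    (hint3 : MeasureTheory.Integrable
      (fun u => (fun i => g u (.inl i)) ⬝ᵥ (Hθθ u).mulVec (fun i => g u (.inl i))
        + (fun j => g u (.inr j)) ⬝ᵥ (Hωω u).mulVec (fun j => g u (.inr j))) μ) :
    ∫ u, ((∑ i, (g u (.inl i)) ^ 2) - (∑ j, (g u (.inr j)) ^ 2)) ∂μ =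
      (1 / β) * ∫ u, (((Sθ u) * (Hθθ u)).trace + ((Sω u) * (Hωω u)).trace) ∂μ
      - (η / 2) * ∫ u, ((fun i => g u (.inl i)) ⬝ᵥ (Hθθ u).mulVec (fun i => g u (.inl i))
          + (fun j => g u (.inr j)) ⬝ᵥ (Hωω u).mulVec (fun j => g u (.inr j))) ∂μ := by
  classical
  -- symmetry of the Hessian
  have hd : ∀ u, DifferentiableAt ℝ (fderiv ℝ Φ) u :=
    fun u => ((hΦ.fderiv_right (m := 1) le_rfl).differentiable one_ne_zero) u
  have hsymm : ∀ u a c, H u a c = H u c a := by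
    intro u a c
    have h2 : IsSymmSndFDerivAt ℝ Φ u := hΦ.contDiffAt.isSymmSndFDerivAt (by simp)
    rw [hH, hH, fderiv_clm_apply (hd u) (differentiableAt_const _),
      fderiv_clm_apply (hd u) (differentiableAt_const _)]
    simp [h2 (EuclideanSpace.single a 1) (EuclideanSpace.single c 1)]
  have hHblk : ∀ u, H u = Matrix.fromBlocks (Hθθ u) (Hθω u) (Hωθ u) (Hωω u) := by
    intro u; ext a c
    cases a with
    | inl i => cases c with
      | inl j => simp [Matrix.fromBlocks, hHθθ]
      | inr j => simp [Matrix.fromBlocks, hHθω]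
    | inr i => cases c with
      | inl j => simp [Matrix.fromBlocks, hHωθ]
      | inr j => simp [Matrix.fromBlocks, hHωω]
  set A : EuclideanSpace ℝ (Fin dθ ⊕ Fin dω) → ℝ :=
    fun u => (∑ i, (g u (Sum.inl i)) ^ 2) - (∑ j, (g u (Sum.inr j)) ^ 2) with hAdef
  set T : EuclideanSpace ℝ (Fin dθ ⊕ Fin dω) → ℝ :=
    fun u => ((Sθ u) * (Hθθ u)).trace + ((Sω u) * (Hωω u)).trace with hTdef
  set Q : EuclideanSpace ℝ (Fin dθ ⊕ Fin dω) → ℝ :=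
    fun u => (fun i => g u (Sum.inl i)) ⬝ᵥ (Hθθ u).mulVec (fun i => g u (Sum.inl i))
        + (fun j => g u (Sum.inr j)) ⬝ᵥ (Hωω u).mulVec (fun j => g u (Sum.inr j)) with hQdef
  have key : ∀ u, AΦ u = -(A u) + (1/β) * T u - (η/2) * Q u := by
    intro u
    set x : Fin dθ → ℝ := fun i => g u (Sum.inl i) with hx
    set y : Fin dω → ℝ := fun j => g u (Sum.inr j) with hy
    have hgu : g u = Sum.elim x y := by funext a; cases a <;> rfl
    -- trace part
    have htr : ((SS u) * (H u)).trace = (2/β) * T u := by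
      rw [hSS, hHblk, Matrix.smul_mul, Matrix.trace_smul, Matrix.fromBlocks_multiply,
        trace_fromBlocks_aux]
      simp [hTdef, smul_eq_mul]
    -- cross term
    have hcross : x ⬝ᵥ (Hθω u).mulVec y = y ⬝ᵥ (Hωθ u).mulVec x := by
      have hT' : Hθω u = (Hωθ u)ᵀ := by
        ext i j
        rw [hHθω, Matrix.transpose_apply, hHωθ]
        exact hsymm u _ _
      rw [hT', Matrix.dotProduct_mulVec, Matrix.vecMul_transpose, dotProduct_comm]
    have h1 : b₀ u ⬝ᵥ g u = -(A u) := by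
      rw [hb₀, hgu, sumElim_dotProduct_sumElim]
      simp only [hAdef, dotProduct, neg_mul, Finset.sum_neg_distrib, sq]
      simp only [Sum.elim_inl, Sum.elim_inr, hx, hy]
      ring
    have h2 : b₁ u ⬝ᵥ g u = -(1/2) * Q u := by
      rw [hb₁, hb₀, Matrix.fromBlocks_mulVec, smul_dotProduct]
      have hneg : (fun i => -(Sum.elim x y (Sum.inl i))) = -x := by
        funext i; simp
      rw [show (fun i => -(g u (Sum.inl i))) = -x by funext i; simp [hx]]
      rw [show (fun j => g u (Sum.inr j)) = y from rfl]
      rw [hgu, sumElim_dotProduct_sumElim]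
      simp only [Sum.elim_comp_inl, Sum.elim_comp_inr, Matrix.mulVec_neg, Matrix.neg_mulVec,
        add_dotProduct, neg_dotProduct, neg_neg, smul_eq_mul]
      have c1 : (Hθθ u).mulVec x ⬝ᵥ x = x ⬝ᵥ (Hθθ u).mulVec x := dotProduct_comm _ _
      have c2 : (Hωω u).mulVec y ⬝ᵥ y = y ⬝ᵥ (Hωω u).mulVec y := dotProduct_comm _ _
      have c3 : (Hθω u).mulVec y ⬝ᵥ x = y ⬝ᵥ (Hωθ u).mulVec x := by
        rw [dotProduct_comm, hcross]
      have c4 : (Hωθ u).mulVec x ⬝ᵥ y = y ⬝ᵥ (Hωθ u).mulVec x := dotProduct_comm _ _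
      rw [c1, c2, c3, c4]
      simp only [hQdef]
      ring
    rw [hAΦ, hb, add_dotProduct, smul_dotProduct, h1, h2, htr, smul_eq_mul]
    field_simp
    ring
  -- integrate
  have hAΦeq : AΦ = fun u => (1/β) * T u - (η/2) * Q u - A u := by
    funext u; rw [key u]; ring
  have hAΦint : MeasureTheory.Integrable AΦ μ := by
    rw [hAΦeq]
    exact ((hint2.const_mul _).sub (hint3.const_mul _)).sub hint1
  have hAeq : A = fun u => (1/β) * T u - (η/2) * Q u - AΦ u := by
    funext u; rw [key u]; ring
  have : ∫ u, A u ∂μ = ∫ u, ((1/β) * T u - (η/2) * Q u - AΦ u) ∂μ := by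
    rw [hAeq]
  have i1 : MeasureTheory.Integrable (fun u => (1/β) * T u) μ := hint2.const_mul _
  have i2 : MeasureTheory.Integrable (fun u => (η/2) * Q u) μ := hint3.const_mul _
  have i12 : MeasureTheory.Integrable (fun u => (1/β) * T u - (η/2) * Q u) μ := i1.sub i2
  rw [this, MeasureTheory.integral_sub i12 hAΦint,
    MeasureTheory.integral_sub i1 i2,
    MeasureTheory.integral_const_mul, MeasureTheory.integral_const_mul, hstat]
  ring
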